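/- Let k ∈ ℤ+, let w be a normalized quasimetric weight function, and let P be a forest with at least 158k² red characters occurring in forests F and G at positions p_F and p_G (i.e., F[p_F..p_F+|P|) = P = G[p_G..p_G+|P|)) with |p_F − p_G| ≤ 2k. Let A = (f_t, g_t)_{t=0}^m be a forest alignment of F onto G with ted^w_A(F,G) ≤ k, let a be the smallest index such that f_a ≥ p_F or g_a ≥ p_G, and let b be the smallest index such that f_b ≥ p_F+|P| and g_b ≥ p_G+|P|. Then there exists t ∈ [a..b] such that f_t − g_t = p_F − p_G. -/

import Mathlib

open scoped NNReal ENNReal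

attribute [local instance] Classical.propDecidable

/-- A labeled parenthesis over the alphabet `α`: `(true, a)` is the opening
parenthesis with label `a`, and `(false, a)` is the closing parenthesis. -/
abbrev Paren (α : Type*) := Bool × α

/-- Balanced strings of labeled parentheses (forests), following Definition 2.1:
the smallest set containing the empty string, closed under concatenation, and
containing `(_a · F · )_a` for every forest `F` and label `a`. -/
inductive IsForest {α : Type*} : List (Paren α) → Prop
  | nil : IsForest []
  | append {F G : List (Paren α)} : IsForest F → IsForest G → IsForest (F ++ G)
  | wrap {F : List (Paren α)} (a : α) : IsForest F → IsForest ((true, a) :: F ++ [(false, a)])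

/-- The fragment `l[i..j)` of a list. -/
def frag {β : Type*} (l : List β) (i j : ℕ) : List β := (l.take j).drop i

/-- `IsNode F i j` means that `[i..j]` is a node of the forest `F`: `F[i]` is an
opening parenthesis, `F[j]` is a closing parenthesis with the same label,
and `F(i..j)` is balanced. -/
def IsNode {α : Type*} (F : List (Paren α)) (i j : ℕ) : Prop :=
  i < j ∧ j < F.length ∧ (∃ a : α, F[i]? = some (true, a) ∧ F[j]? = some (false, a)) ∧
    IsForest (frag F (i + 1) j)

/-- `MateRel F i j` holds when positions `i` and `j` are the paired parentheses
of a node of `F` (in either order); `j` is the mate of `i`. -/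
def MateRel {α : Type*} (F : List (Paren α)) (i j : ℕ) : Prop :=
  IsNode F i j ∨ IsNode F j i

/-- A single edge of the alignment graph: horizontal, vertical, or diagonal. -/
def AlignStep (p q : ℕ × ℕ) : Prop :=
  q = (p.1 + 1, p.2) ∨ q = (p.1, p.2 + 1) ∨ q = (p.1 + 1, p.2 + 1)

/-- An alignment of `X[x..x')` onto `Y[y..y')` is a path in the alignment graph
from `(x, y)` to `(x', y')`, interpreted as its sequence of vertices. -/
def IsAlignment (x x' y y' : ℕ) (path : List (ℕ × ℕ)) : Prop :=
  path.head? = some (x, y) ∧ path.getLast? = some (x', y') ∧ path.Chain' AlignStep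

/-- The alignment (path) aligns character `f` of `X` to character `g` of `Y`
(a diagonal edge `(f, g) → (f + 1, g + 1)`). -/
def AlignsAt (path : List (ℕ × ℕ)) (f g : ℕ) : Prop :=
  ∃ t, path[t]? = some (f, g) ∧ path[t + 1]? = some (f + 1, g + 1)

/-- The alignment deletes character `f` of `X` (a horizontal edge). -/
def DeletesAt (path : List (ℕ × ℕ)) (f : ℕ) : Prop :=
  ∃ t g, path[t]? = some (f, g) ∧ path[t + 1]? = some (f + 1, g)

/-- The alignment inserts character `g` of `Y` (a vertical edge). -/
def InsertsAt (path : List (ℕ × ℕ)) (g : ℕ) : Prop :=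
  ∃ t f, path[t]? = some (f, g) ∧ path[t + 1]? = some (f, g + 1)

/-- Consistency condition of forest alignments (Definition 2.6): whenever the
alignment aligns `F[f]` to `G[g]`, it also aligns the mate of `F[f]` to the mate
of `G[g]`.  An alignment satisfying this condition is a forest alignment. -/
def Consistent {α : Type*} (F G : List (Paren α)) (path : List (ℕ × ℕ)) : Prop :=
  ∀ f g f' g', AlignsAt path f g → MateRel F f f' → MateRel G g g' → AlignsAt path f' g'

/-- The width of the alignment is at most `m`: every vertex `(x, y)` on the path
satisfies `|x - y| ≤ m`. -/
def WidthLE (m : ℕ) (path : List (ℕ × ℕ)) : Prop :=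
  ∀ p ∈ path, p.1 ≤ p.2 + m ∧ p.2 ≤ p.1 + m

/-- The label of the `i`-th character of `X` (as an element of `Σ ∪ {ε}`,
encoded by `Option α`; out-of-range positions give `ε`). -/
def lbl {α : Type*} (X : List (Paren α)) (i : ℕ) : Option α := (X[i]?).map Prod.snd

/-- Cost of an alignment path with respect to the weight function `w̃(p, q) = ½·w(λ(p), λ(q))`:
horizontal edges cost `½·w(λ(X[x]), ε)`, vertical edges `½·w(ε, λ(Y[y]))`, and
diagonal edges `½·w(λ(X[x]), λ(Y[y]))`. -/
noncomputable def pathCost {α : Type*} (w : Option α → Option α → ℝ≥0)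
    (X Y : List (Paren α)) : List (ℕ × ℕ) → ℝ≥0
  | [] => 0
  | [_] => 0
  | p :: q :: rest =>
      (if q.1 = p.1 + 1 ∧ q.2 = p.2 then (1 / 2 : ℝ≥0) * w (lbl X p.1) none
       else if q.1 = p.1 ∧ q.2 = p.2 + 1 then (1 / 2 : ℝ≥0) * w none (lbl Y p.2)
       else (1 / 2 : ℝ≥0) * w (lbl X p.1) (lbl Y p.2)) + pathCost w X Y (q :: rest)

/-- A weight function `w : (Σ ∪ {ε})² → ℝ≥0` is normalized if `w(a, a) = 0` and
`w(a, b) ≥ 1` for distinct `a, b`. -/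
def Normalized {α : Type*} (w : Option α → Option α → ℝ≥0) : Prop :=
  (∀ a, w a a = 0) ∧ ∀ a b, a ≠ b → 1 ≤ w a b

/-- A weight function satisfies the triangle inequality (is a quasimetric). -/
def Quasimetric {α : Type*} (w : Option α → Option α → ℝ≥0) : Prop :=
  ∀ a b c, w a c ≤ w a b + w b c

/-- The weighted tree edit distance `ted^w(F[f..f'), G[g..g'))`: the minimum cost
of a forest alignment of the fragment `F[f..f')` onto the fragment `G[g..g')`
(`∞` if no forest alignment exists). -/
noncomputable def tedFrag {α : Type*} (w : Option α → Option α → ℝ≥0)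
    (F G : List (Paren α)) (f f' g g' : ℕ) : ℝ≥0∞ :=
  ⨅ p : { p : List (ℕ × ℕ) // IsAlignment f f' g g' p ∧ Consistent F G p },
    (pathCost w F G p.1 : ℝ≥0∞)

/-- The bounded tree edit distance `bted_k^w(F[f..f'), G[g..g'))`: the minimum
cost of a forest alignment of width at most `2k` (`∞` if none exists). -/
noncomputable def btedFrag {α : Type*} (k : ℕ) (w : Option α → Option α → ℝ≥0)
    (F G : List (Paren α)) (f f' g g' : ℕ) : ℝ≥0∞ :=
  ⨅ p : { p : List (ℕ × ℕ) //
      IsAlignment f f' g g' p ∧ Consistent F G p ∧ WidthLE (2 * k) p },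
    (pathCost w F G p.1 : ℝ≥0∞)

/-- A string `S` over `P_Σ` is a periodic block (Definition 5.4): `|S| ≥ 42k` and
`S` has a string period of length at most `4k` containing equally many opening
and closing parentheses. -/
def IsPeriodicBlock {α : Type*} (k : ℕ) (S : List (Paren α)) : Prop :=
  42 * k ≤ S.length ∧ ∃ p, 0 < p ∧ p ≤ 4 * k ∧
    (∀ i, i + p < S.length → S[i]? = S[i + p]?) ∧
    (S.take p).countP (fun c => c.1) = (S.take p).countP (fun c => !c.1)

/-- A character `T[i]` is black (Definition 5.5) if there exists a periodic block
`T[l..r)` of `T` such that `i ∈ [l + 5k..r − 5k)`; otherwise it is red. -/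
def IsBlack {α : Type*} (k : ℕ) (T : List (Paren α)) (i : ℕ) : Prop :=
  ∃ l r, r ≤ T.length ∧ l + 5 * k ≤ i ∧ i + 5 * k < r ∧ IsPeriodicBlock k (frag T l r)

/-- The number of red characters of `T`. -/
noncomputable def redCount {α : Type*} (k : ℕ) (T : List (Paren α)) : ℕ :=
  ((Finset.range T.length).filter fun i => ¬ IsBlack k T i).card

namespace TedAux
open List
variable {α : Type*}

/-- balance of a string of parentheses -/
def bz (l : List (Paren α)) : ℤ := (l.countP fun c => c.1) - (l.countP fun c => !c.1)

/-- prefix height -/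
def hgt (X : List (Paren α)) (t : ℕ) : ℤ := bz (X.take t)

@[simp] lemma bz_nil : bz ([] : List (Paren α)) = 0 := by simp [bz]

lemma bz_append (l l' : List (Paren α)) : bz (l ++ l') = bz l + bz l' := by
  simp [bz, List.countP_append]; ring

lemma bz_single (c : Paren α) : bz [c] = if c.1 then 1 else -1 := by
  rcases c with ⟨b, x⟩; cases b <;> simp [bz, List.countP_cons]

@[simp] lemma hgt_zero (X : List (Paren α)) : hgt X 0 = 0 := by simp [hgt]

lemma hgt_succ (X : List (Paren α)) (t : ℕ) (h : t < X.length) :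
    hgt X (t + 1) = hgt X t + (if X[t].1 then 1 else -1) := by
  have : X.take (t+1) = X.take t ++ [X[t]] := by
    rw [List.take_succ, List.getElem?_eq_getElem h]; rfl
  rw [hgt, this, bz_append, bz_single, hgt]

lemma hgt_succ_open (X : List (Paren α)) (t : ℕ) (a : α) (h : X[t]? = some (true, a)) :
    hgt X (t + 1) = hgt X t + 1 := by
  obtain ⟨h1, h2⟩ := List.getElem?_eq_some_iff.mp h
  rw [hgt_succ X t h1, h2]; simp

lemma hgt_succ_close (X : List (Paren α)) (t : ℕ) (a : α) (h : X[t]? = some (false, a)) :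
    hgt X (t + 1) = hgt X t - 1 := by
  obtain ⟨h1, h2⟩ := List.getElem?_eq_some_iff.mp h
  rw [hgt_succ X t h1, h2]; simp; ring

lemma forest_bz {X : List (Paren α)} (h : IsForest X) : bz X = 0 := by
  induction h with
  | nil => simp
  | append _ _ ih1 ih2 => rw [bz_append, ih1, ih2]; ring
  | wrap a _ ih =>
      simp only [bz, List.countP_cons, List.countP_append] at ih ⊢
      simp at ih ⊢; omega

lemma take_of_append_forest {X : List (Paren α)} (t : ℕ) :
    ∀ (F G : List (Paren α)), X = F ++ G →
    X.take t = F.take t ++ G.take (t - F.length) := by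
  intro F G h; subst h; exact List.take_append

lemma forest_hgt_nonneg {X : List (Paren α)} (h : IsForest X) : ∀ t, 0 ≤ hgt X t := by
  induction h with
  | nil => intro t; simp [hgt]
  | @append F G hF hG ih1 ih2 =>
      intro t
      rw [hgt, List.take_append, bz_append]
      rcases le_or_gt t F.length with h | h
      · rw [Nat.sub_eq_zero_of_le h]; simpa [hgt] using ih1 t
      · rw [List.take_of_length_le (le_of_lt h)]
        have := ih2 (t - F.length)
        rw [hgt] at this
        have hF0 := forest_bz hF
        omega
  | @wrap F a hF ih =>
      intro t
      rcases Nat.eq_zero_or_pos t with rfl | ht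
      · simp [hgt]
      obtain ⟨s, rfl⟩ := Nat.exists_eq_add_of_le ht
      have hx : ((true, a) :: F ++ [(false, a)] : List (Paren α)).take (s + 1)
          = (true, a) :: (F ++ [(false, a)]).take s := by
        rfl
      rw [hgt, show Nat.succ 0 + s = s + 1 by omega, hx, show ((true,a) : Paren α) :: (F ++ [(false,a)]).take s
          = [((true,a) : Paren α)] ++ (F ++ [(false,a)]).take s from rfl,
        bz_append, bz_single, List.take_append, bz_append]
      have h1 := ih s
      rw [hgt] at h1
      have h2 : bz (([(false, a)] : List (Paren α)).take (s - F.length)) = 0 ∨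
          bz (([(false, a)] : List (Paren α)).take (s - F.length)) = -1 := by
        rcases Nat.eq_zero_or_pos (s - F.length) with h | h
        · left; simp [h]
        · right
          have : (([(false, a)] : List (Paren α)).take (s - F.length)) = [(false,a)] := by
            apply List.take_of_length_le; simp only [List.length_singleton]; omega
          rw [this, bz_single]; simp
      simp only []
      rcases h2 with h2 | h2 <;> rw [h2] <;> simp <;> omega

end TedAux
namespace TedAux
open List
variable {α : Type*}

lemma frag_eq (X : List (Paren α)) (s t : ℕ) : frag X s t = (X.drop s).take (t - s) := by
  unfold frag; rw [List.drop_take]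

lemma frag_getElem? (X : List (Paren α)) (s t n : ℕ) :
    (frag X s t)[n]? = if s + n < t then X[s + n]? else none := by
  unfold frag
  rw [List.getElem?_drop, List.getElem?_take]

lemma take_frag (X : List (Paren α)) {s t : ℕ} (u : ℕ) (h : s + u ≤ t) :
    (frag X s t).take u = frag X s (s + u) := by
  rw [frag_eq, frag_eq, List.take_take, Nat.add_sub_cancel_left]
  congr 1
  omega

lemma hgt_add (X : List (Paren α)) {s t : ℕ} (h : s ≤ t) :
    hgt X t = hgt X s + bz (frag X s t) := by
  unfold hgt frag
  conv_lhs => rw [← List.take_append_drop s (X.take t), bz_append]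
  rw [List.take_take, min_eq_left h]

lemma hgt_ge_length (X : List (Paren α)) {t : ℕ} (h : X.length ≤ t) :
    hgt X t = bz X := by
  unfold hgt; rw [List.take_of_length_le h]

lemma node_hgt {X : List (Paren α)} {i j : ℕ} (h : IsNode X i j) :
    hgt X (j + 1) = hgt X i ∧ ∀ t, i < t → t ≤ j → hgt X i < hgt X t := by
  obtain ⟨hij, hj, ⟨a, hXi, hXj⟩, hfor⟩ := h
  have hi1 : hgt X (i + 1) = hgt X i + 1 := hgt_succ_open X i a hXi
  have key : ∀ t, i + 1 ≤ t → t ≤ j → hgt X t = hgt X (i+1) + bz (frag X (i+1) t) := by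
    intro t h1 _; exact hgt_add X h1
  have hfr : ∀ t, i + 1 ≤ t → t ≤ j → bz (frag X (i+1) t) = hgt (frag X (i+1) j) (t - (i+1)) := by
    intro t h1 h2
    rw [hgt, take_frag X _ (show (i+1) + (t - (i+1)) ≤ j by omega),
      show (i+1) + (t - (i+1)) = t by omega]
  constructor
  · have hj' : hgt X j = hgt X (i+1) + bz (frag X (i+1) j) := key j hij (le_refl j)
    rw [forest_bz hfor] at hj'
    have := hgt_succ_close X j a hXj
    omega
  · intro t h1 h2
    have h3 := key t h1 h2
    rw [hfr t h1 h2] at h3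
    have := forest_hgt_nonneg hfor (t - (i+1))
    omega

lemma isNode_shift {X : List (Paren α)} (A B : List (Paren α)) {i j : ℕ}
    (h : IsNode X i j) : IsNode (A ++ X ++ B) (A.length + i) (A.length + j) := by
  obtain ⟨hij, hj, ⟨a, hXi, hXj⟩, hfor⟩ := h
  have hget : ∀ m, m < X.length → (A ++ X ++ B)[A.length + m]? = X[m]? := by
    intro m hm
    rw [List.append_assoc, List.getElem?_append_right (by omega),
      Nat.add_sub_cancel_left, List.getElem?_append_left hm]
  refine ⟨by omega, ?_, ⟨a, ?_, ?_⟩, ?_⟩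
  · simp only [List.length_append]; omega
  · rw [hget i (by omega)]; exact hXi
  · rw [hget j hj]; exact hXj
  · have hfrag : frag (A ++ X ++ B) (A.length + i + 1) (A.length + j) = frag X (i + 1) j := by
      apply List.ext_getElem?
      intro n
      rw [frag_getElem?, frag_getElem?]
      by_cases hn : i + 1 + n < j
      · rw [if_pos (by omega), if_pos hn,
          show A.length + i + 1 + n = A.length + (i + 1 + n) by omega,
          hget _ (by omega)]
      · rw [if_neg (by omega), if_neg hn]
    rw [hfrag]; exact hfor

lemma mate_exists {X : List (Paren α)} (h : IsForest X) :
    ∀ i, i < X.length → ∃ j, MateRel X i j := by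
  induction h with
  | nil => intro i hi; simp at hi
  | @append F G hF hG ih1 ih2 =>
      intro i hi
      simp only [List.length_append] at hi
      rcases lt_or_ge i F.length with h | h
      · obtain ⟨j, hj⟩ := ih1 i h
        refine ⟨j, ?_⟩
        have conv : ∀ u v, IsNode F u v → IsNode (F ++ G) u v := by
          intro u v huv
          have := isNode_shift ([] : List (Paren α)) G huv
          simpa using this
        rcases hj with hj | hj
        · exact Or.inl (conv _ _ hj)
        · exact Or.inr (conv _ _ hj)
      · obtain ⟨j, hj⟩ := ih2 (i - F.length) (by omega)
        refine ⟨F.length + j, ?_⟩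
        have conv : ∀ u v, IsNode G u v → IsNode (F ++ G) (F.length + u) (F.length + v) := by
          intro u v huv
          have := isNode_shift F ([] : List (Paren α)) huv
          simpa using this
        rcases hj with hj | hj
        · have := conv _ _ hj
          rw [show F.length + (i - F.length) = i by omega] at this
          exact Or.inl this
        · have := conv _ _ hj
          rw [show F.length + (i - F.length) = i by omega] at this
          exact Or.inr this
  | @wrap F a hF ih =>
      intro i hi
      have hXeq : ([(true, a)] ++ F ++ [(false, a)] : List (Paren α)) =
          (true, a) :: F ++ [(false, a)] := by simp
      have hnode0 : IsNode ((true, a) :: F ++ [(false, a)]) 0 (F.length + 1) := by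
        refine ⟨by omega, ?_, ⟨a, ?_, ?_⟩, ?_⟩
        · simp
        · simp
        · rw [show ((true, a) :: F ++ [(false, a)] : List (Paren α))[F.length + 1]?
              = (F ++ [(false, a)])[F.length]? from List.getElem?_cons_succ,
            List.getElem?_append_right (le_refl _), Nat.sub_self]
          rfl
        · have : frag ((true, a) :: F ++ [(false, a)]) 1 (F.length + 1) = F := by
            apply List.ext_getElem?
            intro n
            rw [frag_getElem?]
            by_cases hn : 1 + n < F.length + 1
            · rw [if_pos hn,
                show ((true, a) :: F ++ [(false, a)] : List (Paren α))[1 + n]?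
                  = (F ++ [(false, a)])[n]? by rw [show 1 + n = n + 1 by omega]; exact List.getElem?_cons_succ,
                List.getElem?_append_left (by omega)]
            · rw [if_neg hn, eq_comm, List.getElem?_eq_none_iff]
              omega
          rw [this]; exact hF
      simp only [List.length_cons, List.length_append, List.length_singleton] at hi
      rcases Nat.eq_zero_or_pos i with rfl | hipos
      · exact ⟨F.length + 1, Or.inl hnode0⟩
      rcases Nat.lt_or_ge i (F.length + 1) with hilt | hige
      · obtain ⟨j, hj⟩ := ih (i - 1) (by omega)
        refine ⟨1 + j, ?_⟩
        have conv : ∀ u v, IsNode F u v → IsNode ((true, a) :: F ++ [(false, a)]) (1 + u) (1 + v) := by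
          intro u v huv
          have := isNode_shift [(true, a)] [(false, a)] huv
          rw [hXeq] at this
          simpa using this
        rcases hj with hj | hj
        · have := conv _ _ hj
          rw [show 1 + (i - 1) = i by omega] at this
          exact Or.inl this
        · have := conv _ _ hj
          rw [show 1 + (i - 1) = i by omega] at this
          exact Or.inr this
      · have : i = F.length + 1 := by simp at hi; omega
        subst this
        exact ⟨0, Or.inr hnode0⟩

lemma node_right_unique {X : List (Paren α)} {i j j' : ℕ}
    (h : IsNode X i j) (h' : IsNode X i j') : j = j' := by
  by_contra hne
  wlog hlt : j < j' generalizing j j'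
  · exact this h' h (Ne.symm hne) (by omega)
  have p1 := (node_hgt h).1
  have p2 := (node_hgt h').2 (j + 1) (by exact Nat.lt_of_lt_of_le h.1 (by omega)) (by omega)
  omega

lemma node_left_unique {X : List (Paren α)} {i i' j : ℕ}
    (h : IsNode X i j) (h' : IsNode X i' j) : i = i' := by
  by_contra hne
  wlog hlt : i < i' generalizing i i'
  · exact this h' h (Ne.symm hne) (by omega)
  have p1 := (node_hgt h).1
  have p1' := (node_hgt h').1
  have p2 := (node_hgt h).2 i' hlt (le_of_lt h'.1)
  omega

lemma nest_opens {X : List (Paren α)} {o m o' m' : ℕ}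
    (h : IsNode X o m) (h' : IsNode X o' m') (hoo : o < o')
    (hcond : ∀ t, o < t → t ≤ o' → hgt X o < hgt X t) : m' < m := by
  have hom : o' < m := by
    rcases Nat.lt_or_ge o' m with h1 | h1
    · exact h1
    rcases Nat.eq_or_lt_of_le h1 with h1 | h1
    · exfalso
      obtain ⟨a, hopen, _⟩ := h'.2.2.1
      obtain ⟨a', _, hclose⟩ := h.2.2.1
      rw [h1] at hclose
      rw [hopen] at hclose
      simp at hclose
    · exfalso
      have := hcond (m + 1) (by have := h.1; omega) (by omega)
      have := (node_hgt h).1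
      omega
  by_contra hmm
  push_neg at hmm
  rcases Nat.eq_or_lt_of_le hmm with heq | hlt
  · exact absurd (node_left_unique h (heq ▸ h')) (by omega)
  have q1 := (node_hgt h').2 (m + 1) (by omega) (by omega)
  have q2 := hcond o' hoo (le_refl _)
  have q3 := (node_hgt h).1
  omega

lemma nest_closes {X : List (Paren α)} {m c m' c' : ℕ}
    (h : IsNode X m c) (h' : IsNode X m' c') (hcc : c < c')
    (hcond : ∀ t, m ≤ t → t ≤ c' → hgt X (c' + 1) < hgt X t) : m' < m := by
  by_contra hmm
  push_neg at hmm
  have p1 := (node_hgt h').1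
  have := hcond m' hmm (le_of_lt h'.1)
  omega

end TedAux
namespace TedAux
open List
variable {α : Type*}

/-- vertex of a path -/
def vv (path : List (ℕ × ℕ)) (t : ℕ) : ℕ × ℕ := path.getD t (0, 0)

lemma vv_some {path : List (ℕ × ℕ)} {t : ℕ} (h : t < path.length) :
    path[t]? = some (vv path t) := by
  rw [List.getElem?_eq_getElem h]
  unfold vv
  rw [List.getD_eq_getElem _ _ h]

lemma some_vv {path : List (ℕ × ℕ)} {t : ℕ} {p : ℕ × ℕ} (h : path[t]? = some p) :
    t < path.length ∧ p = vv path t := by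
  obtain ⟨h1, h2⟩ := List.getElem?_eq_some_iff.mp h
  refine ⟨h1, ?_⟩
  rw [← h2]
  unfold vv
  rw [List.getD_eq_getElem _ _ h1]

lemma path_step {path : List (ℕ × ℕ)} (hch : path.Chain' AlignStep) {t : ℕ}
    (h : t + 1 < path.length) : AlignStep (vv path t) (vv path (t + 1)) := by
  have := List.isChain_iff_getElem.mp hch t (by omega)
  unfold vv
  rw [List.getD_eq_getElem _ _ (by omega), List.getD_eq_getElem _ _ (by omega)]
  simpa [List.get_eq_getElem] using this

lemma path_mono {path : List (ℕ × ℕ)} (hch : path.Chain' AlignStep) {s t : ℕ}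
    (hst : s ≤ t) (h : t < path.length) :
    (vv path s).1 ≤ (vv path t).1 ∧ (vv path s).2 ≤ (vv path t).2 := by
  induction t with
  | zero => 
      have : s = 0 := by omega
      subst this; exact ⟨le_refl _, le_refl _⟩
  | succ t ih =>
      rcases Nat.eq_or_lt_of_le hst with rfl | hlt
      · exact ⟨le_refl _, le_refl _⟩
      · have h1 := ih (by omega) (by omega)
        have h2 := path_step hch h
        rcases h2 with h2 | h2 | h2 <;> rw [h2] <;> simp <;> omega

/-- edge cost at index t -/
noncomputable def ec (w : Option α → Option α → ℝ≥0) (X Y : List (Paren α))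
    (path : List (ℕ × ℕ)) (t : ℕ) : ℝ≥0 :=
  let p := vv path t
  let q := vv path (t + 1)
  if q.1 = p.1 + 1 ∧ q.2 = p.2 then (1 / 2 : ℝ≥0) * w (lbl X p.1) none
  else if q.1 = p.1 ∧ q.2 = p.2 + 1 then (1 / 2 : ℝ≥0) * w none (lbl Y p.2)
  else (1 / 2 : ℝ≥0) * w (lbl X p.1) (lbl Y p.2)

lemma pathCost_eq_sum (w : Option α → Option α → ℝ≥0) (X Y : List (Paren α)) :
    ∀ path : List (ℕ × ℕ),
      pathCost w X Y path = ∑ t ∈ Finset.range (path.length - 1), ec w X Y path t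
  | [] => by simp [pathCost]
  | [p] => by simp [pathCost]
  | p :: q :: rest => by
      have ihq := pathCost_eq_sum w X Y (q :: rest)
      have hlen : (p :: q :: rest).length - 1 = ((q :: rest).length - 1) + 1 := by
        simp
      rw [pathCost, ihq, hlen, Finset.sum_range_succ']
      have hec0 : ec w X Y (p :: q :: rest) 0 =
          (if q.1 = p.1 + 1 ∧ q.2 = p.2 then (1 / 2 : ℝ≥0) * w (lbl X p.1) none
           else if q.1 = p.1 ∧ q.2 = p.2 + 1 then (1 / 2 : ℝ≥0) * w none (lbl Y p.2)
           else (1 / 2 : ℝ≥0) * w (lbl X p.1) (lbl Y p.2)) := by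
        unfold ec vv
        rfl
      have hecS : ∀ t, ec w X Y (p :: q :: rest) (t + 1) = ec w X Y (q :: rest) t := by
        intro t
        unfold ec vv
        rfl
      rw [hec0]
      rw [Finset.sum_congr rfl (fun t _ => hecS t)]
      ring

lemma cost_lower_bound (w : Option α → Option α → ℝ≥0) (X Y : List (Paren α))
    (path : List (ℕ × ℕ)) (T : Finset ℕ)
    (hT : ∀ t ∈ T, t < path.length - 1 ∧ (1 / 2 : ℝ≥0) ≤ ec w X Y path t) :
    (T.card : ℝ≥0) * (1 / 2) ≤ pathCost w X Y path := by
  rw [pathCost_eq_sum]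
  have h1 : ∑ t ∈ T, (1 / 2 : ℝ≥0) ≤ ∑ t ∈ T, ec w X Y path t :=
    Finset.sum_le_sum (fun t ht => (hT t ht).2)
  have h2 : ∑ t ∈ T, ec w X Y path t ≤ ∑ t ∈ Finset.range (path.length - 1), ec w X Y path t :=
    Finset.sum_le_sum_of_subset (fun t ht => Finset.mem_range.mpr (hT t ht).1)
  calc (T.card : ℝ≥0) * (1 / 2) = ∑ _t ∈ T, (1 / 2 : ℝ≥0) := by
        rw [Finset.sum_const, nsmul_eq_mul]
    _ ≤ _ := le_trans h1 h2

end TedAux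
namespace TedAux
open List
variable {α : Type*}

lemma mateRel_open {X : List (Paren α)} {j m : ℕ} {a : α}
    (h : MateRel X j m) (hc : X[j]? = some (true, a)) : IsNode X j m := by
  rcases h with h | h
  · exact h
  · exfalso
    obtain ⟨a', _, hcl⟩ := h.2.2.1
    rw [hc] at hcl
    simp at hcl

lemma mateRel_close {X : List (Paren α)} {j m : ℕ} {a : α}
    (h : MateRel X j m) (hc : X[j]? = some (false, a)) : IsNode X m j := by
  rcases h with h | h
  · exfalso
    obtain ⟨a', hop, _⟩ := h.2.2.1
    rw [hc] at hop
    simp at hop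
  · exact h

lemma frag_length (X : List (Paren α)) (s t : ℕ) :
    (frag X s t).length = min t X.length - s := by
  unfold frag; simp

lemma run_black (k : ℕ) (hk : 0 < k) (P : List (Paren α)) (hP : IsForest P)
    {x s : ℕ} (hs0 : 0 < s) (hs4 : s ≤ 4 * k)
    (hlen : x + 42 * k + s + 1 ≤ P.length)
    (hper : ∀ j, x ≤ j → j ≤ x + 42 * k → P[j + s]? = P[j]?)
    (hrule : ∀ j, x ≤ j → j ≤ x + 42 * k → ∀ jF jG,
      MateRel P (j + s) jF → MateRel P j jG → jG < jF) :
    ∀ i, x + 5 * k ≤ i → i ≤ x + 37 * k → IsBlack k P i := by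
  -- heights are periodic along the run
  set δ : ℤ := hgt P (x + s) - hgt P x with hδ
  have hcharel : ∀ j, x ≤ j → j ≤ x + 42 * k → ∀ (hj1 : j + s < P.length) (hj2 : j < P.length),
      P[j + s] = P[j] := by
    intro j h1 h2 hj1 hj2
    have := hper j h1 h2
    rw [List.getElem?_eq_getElem hj1, List.getElem?_eq_getElem hj2] at this
    exact Option.some_injective _ this
  have hgtper : ∀ u, x ≤ u → u ≤ x + 42 * k + 1 → hgt P (u + s) = hgt P u + δ := by
    intro u h1
    induction u, h1 using Nat.le_induction with
    | base => intro _; rw [hδ]; ring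
    | succ u hu ih =>
        intro h2
        have ih' := ih (by omega)
        have hu2 : u ≤ x + 42 * k := by omega
        have hj1 : u + s < P.length := by omega
        have hj2 : u < P.length := by omega
        have hc := hcharel u hu hu2 hj1 hj2
        have e1 := hgt_succ P (u + s) hj1
        have e2 := hgt_succ P u hj2
        rw [hc] at e1
        rw [show u + 1 + s = (u + s) + 1 by omega, e1, e2]
        omega
  -- the period is balanced
  have hδ0 : δ = 0 := by
    rcases lt_trichotomy δ 0 with hneg | h0 | hpos
    · -- more closing parens in the period: find a closing paren at the "first minimum"
      exfalso
      have hne : (Finset.Icc (x + s) (x + 2 * s)).Nonempty := by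
        rw [Finset.nonempty_Icc]; omega
      obtain ⟨u0, hu0, hMeq⟩ := Finset.exists_mem_eq_inf' hne (hgt P)
      set M : ℤ := (Finset.Icc (x + s) (x + 2 * s)).inf' hne (hgt P) with hM
      have hMle : ∀ u, x + s ≤ u → u ≤ x + 2 * s → M ≤ hgt P u := by
        intro u h1 h2
        exact Finset.inf'_le _ (Finset.mem_Icc.mpr ⟨h1, h2⟩)
      set S := (Finset.Icc (x + s) (x + 2 * s)).filter (fun u => hgt P u = M) with hS
      have hSne : S.Nonempty := ⟨u0, Finset.mem_filter.mpr ⟨hu0, hMeq.symm⟩⟩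
      set j₁ := S.min' hSne with hj₁
      have hj₁S := Finset.mem_filter.mp (S.min'_mem hSne)
      rw [Finset.mem_Icc] at hj₁S
      obtain ⟨⟨hj₁l, hj₁r⟩, hj₁M⟩ := hj₁S
      rw [← hj₁] at hj₁l hj₁r hj₁M
      have hfirst : ∀ u, x + s ≤ u → u < j₁ → M < hgt P u := by
        intro u h1 h2
        rcases lt_or_eq_of_le (hMle u h1 (by omega)) with h | h
        · exact h
        · exfalso
          have : j₁ ≤ u := Finset.min'_le _ _
            (Finset.mem_filter.mpr ⟨Finset.mem_Icc.mpr ⟨h1, by omega⟩, h.symm⟩)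
          omega
      -- j₁ > x + s
      have hxsM : M < hgt P (x + s) := by
        have h1 : hgt P (x + 2 * s) = hgt P (x + s) + δ := by
          have := hgtper (x + s) (by omega) (by omega)
          rw [show x + s + s = x + 2 * s by omega] at this
          exact this
        have h2 := hMle (x + 2 * s) (by omega) (le_refl _)
        omega
      have hj₁x : x + s < j₁ := by
        rcases Nat.eq_or_lt_of_le hj₁l with h | h
        · exfalso; rw [← h] at hj₁M; omega
        · exact h
      set c := j₁ - 1 with hc
      have hcl : x + s ≤ c := by omega
      have hcr : c ≤ x + 2 * s - 1 := by omega
      have hcP : c < P.length := by omega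
      have hgtc : M < hgt P c := hfirst c (by omega) (by omega)
      have hgtc1 : hgt P (c + 1) = M := by
        rw [show c + 1 = j₁ by omega]; exact hj₁M
      -- P[c] is a closing paren
      obtain ⟨cc, hccel⟩ : ∃ cc, P[c]? = some cc := ⟨P[c], List.getElem?_eq_getElem hcP⟩
      have hcc1 : cc.1 = false := by
        by_contra hb
        have hbt : cc.1 = true := by simpa using hb
        have hcc2 : cc = (true, cc.2) := by rw [← hbt]
        have hcc' : P[c]? = some (true, cc.2) := by rw [hccel, ← hcc2]
        have := hgt_succ_open P c cc.2 hcc'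
        omega
      have hcc2 : cc = (false, cc.2) := by rw [← hcc1]
      have hcclose : P[c]? = some (false, cc.2) := by rw [hccel, ← hcc2]
      have hstep : hgt P (c + 1) = hgt P c - 1 := hgt_succ_close P c cc.2 hcclose
      have hgtcM : hgt P c = M + 1 := by omega
      -- P[c+s] is a closing paren too
      have hcsel : P[c + s]? = some (false, cc.2) := by
        rw [hper c (by omega) (by omega)]; exact hcclose
      -- height at c+s+1
      have hgtcs1 : hgt P (c + s + 1) = M + δ := by
        have := hgtper (c + 1) (by omega) (by omega)
        rw [show c + 1 + s = c + s + 1 by omega] at this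
        omega
      -- mates
      obtain ⟨mc, hmc⟩ := mate_exists hP c hcP
      obtain ⟨mc', hmc'⟩ := mate_exists hP (c + s) (by omega)
      have hnc : IsNode P mc c := mateRel_close hmc hcclose
      have hnc' : IsNode P mc' (c + s) := mateRel_close hmc' hcsel
      -- the nesting condition
      have hcond : ∀ t, mc ≤ t → t ≤ c + s → hgt P (c + s + 1) < hgt P t := by
        intro t h1 h2
        rw [hgtcs1]
        rcases Nat.lt_or_ge t (c + 1) with h3 | h3
        · -- t ∈ [mc, c]
          have hnode1 := (node_hgt hnc).1
          rcases Nat.eq_or_lt_of_le h1 with h4 | h4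
          · rw [← h4, ← hnode1, hgtc1]; omega
          · have := (node_hgt hnc).2 t h4 (by omega)
            omega
        · rcases Nat.eq_or_lt_of_le h3 with h4 | h4
          · rw [← h4, hgtc1]; omega
          · -- t ∈ (c+1, c+s]
            have h5 : x ≤ t - s := by omega
            have h6 : hgt P t = hgt P (t - s) + δ := by
              have := hgtper (t - s) h5 (by omega)
              rw [show t - s + s = t by omega] at this
              omega
            have h7 : M + 1 ≤ hgt P (t - s) := by
              rcases Nat.lt_or_ge (t - s) (x + s) with h8 | h8
              · -- below the window: use periodicity upward
                have h9 : hgt P (t - s + s) = hgt P (t - s) + δ := hgtper (t - s) h5 (by omega)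
                have h10 := hMle (t - s + s) (by omega) (by omega)
                omega
              · -- in the window, before the first argmin
                have := hfirst (t - s) h8 (by omega)
                omega
            omega
      have hlt1 := nest_closes hnc hnc' (by omega) hcond
      have hlt2 := hrule c (by omega) (by omega) mc' mc hmc' hmc
      omega
    · exact h0
    · -- more opening parens: find an opening paren at the "last minimum"
      exfalso
      have hne : (Finset.Icc (x + s) (x + 2 * s)).Nonempty := by
        rw [Finset.nonempty_Icc]; omega
      obtain ⟨u0, hu0, hMeq⟩ := Finset.exists_mem_eq_inf' hne (hgt P)
      set M : ℤ := (Finset.Icc (x + s) (x + 2 * s)).inf' hne (hgt P) with hM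
      have hMle : ∀ u, x + s ≤ u → u ≤ x + 2 * s → M ≤ hgt P u := by
        intro u h1 h2
        exact Finset.inf'_le _ (Finset.mem_Icc.mpr ⟨h1, h2⟩)
      set S := (Finset.Icc (x + s) (x + 2 * s)).filter (fun u => hgt P u = M) with hS
      have hSne : S.Nonempty := ⟨u0, Finset.mem_filter.mpr ⟨hu0, hMeq.symm⟩⟩
      set j₂ := S.max' hSne with hj₂
      have hj₂S := Finset.mem_filter.mp (S.max'_mem hSne)
      rw [Finset.mem_Icc] at hj₂S
      obtain ⟨⟨hj₂l, hj₂r⟩, hj₂M⟩ := hj₂S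
      rw [← hj₂] at hj₂l hj₂r hj₂M
      have hlast : ∀ u, x + s ≤ u → u ≤ x + 2 * s → j₂ < u → M < hgt P u := by
        intro u h1 h2 h3
        rcases lt_or_eq_of_le (hMle u h1 h2) with h | h
        · exact h
        · exfalso
          have : u ≤ j₂ := Finset.le_max' _ _
            (Finset.mem_filter.mpr ⟨Finset.mem_Icc.mpr ⟨h1, h2⟩, h.symm⟩)
          omega
      -- j₂ < x + 2s
      have hj₂lt : j₂ < x + 2 * s := by
        rcases Nat.eq_or_lt_of_le hj₂r with h | h
        · exfalso
          have h1 : hgt P (x + 2 * s) = hgt P (x + s) + δ := by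
            have := hgtper (x + s) (by omega) (by omega)
            rw [show x + s + s = x + 2 * s by omega] at this
            exact this
          have h2 := hMle (x + s) (le_refl _) (by omega)
          rw [h] at hj₂M
          omega
        · exact h
      have hj₂P : j₂ < P.length := by omega
      -- P[j₂] is an opening paren
      have hup : M < hgt P (j₂ + 1) := hlast (j₂ + 1) (by omega) (by omega) (by omega)
      obtain ⟨cc, hccel⟩ : ∃ cc, P[j₂]? = some cc := ⟨P[j₂], List.getElem?_eq_getElem hj₂P⟩
      have hcc1 : cc.1 = true := by
        by_contra hb
        have hbf : cc.1 = false := by simpa using hb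
        have hcc2 : cc = (false, cc.2) := by rw [← hbf]
        have hcc' : P[j₂]? = some (false, cc.2) := by rw [hccel, ← hcc2]
        have := hgt_succ_close P j₂ cc.2 hcc'
        omega
      have hcc2 : cc = (true, cc.2) := by rw [← hcc1]
      have hcopen : P[j₂]? = some (true, cc.2) := by rw [hccel, ← hcc2]
      have hcsopen : P[j₂ + s]? = some (true, cc.2) := by
        rw [hper j₂ (by omega) (by omega)]; exact hcopen
      -- the nesting condition
      have hcond : ∀ t, j₂ < t → t ≤ j₂ + s → hgt P j₂ < hgt P t := by
        intro t h1 h2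
        rw [hj₂M]
        rcases le_or_gt t (x + 2 * s) with h3 | h3
        · exact hlast t (by omega) h3 h1
        · have h5 : x + s ≤ t - s := by omega
          have h6 : hgt P t = hgt P (t - s) + δ := by
            have := hgtper (t - s) (by omega) (by omega)
            rw [show t - s + s = t by omega] at this
            omega
          have h7 := hMle (t - s) h5 (by omega)
          omega
      obtain ⟨m1, hm1⟩ := mate_exists hP j₂ hj₂P
      obtain ⟨m2, hm2⟩ := mate_exists hP (j₂ + s) (by omega)
      have hn1 : IsNode P j₂ m1 := mateRel_open hm1 hcopen
      have hn2 : IsNode P (j₂ + s) m2 := mateRel_open hm2 hcsopen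
      have hlt1 := nest_opens hn1 hn2 (by omega) hcond
      have hlt2 := hrule j₂ (by omega) (by omega) m2 m1 hm2 hm1
      omega
  -- now build the periodic block
  intro i hi1 hi2
  refine ⟨x, x + 42 * k + s + 1, by omega, by omega, by omega, ?_, ?_⟩
  · -- length
    rw [frag_length]
    omega
  · -- the period
    refine ⟨s, hs0, hs4, ?_, ?_⟩
    · intro i0 hi0
      rw [frag_length] at hi0
      rw [frag_getElem?, frag_getElem?, if_pos (by omega), if_pos (by omega),
        show x + (i0 + s) = (x + i0) + s by omega]
      exact (hper (x + i0) (by omega) (by omega)).symm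
    · -- balance
      have htake : (frag P x (x + 42 * k + s + 1)).take s = frag P x (x + s) :=
        take_frag P s (by omega)
      rw [htake]
      have hb : bz (frag P x (x + s)) = 0 := by
        have := hgt_add P (show x ≤ x + s by omega)
        omega
      unfold bz at hb
      omega

end TedAux
namespace TedAux
open List
variable {α : Type*}

lemma pairext {p : ℕ × ℕ} {u v : ℕ} (h1 : p.1 = u) (h2 : p.2 = v) : p = (u, v) := by
  rcases p with ⟨x, y⟩
  simp only at h1 h2
  rw [h1, h2]

lemma core (k : ℕ) (hk : 0 < k)
    (w : Option α → Option α → ℝ≥0) (hw : Normalized w)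
    (P F1 F2 G1 G2 : List (Paren α)) (hP : IsForest P)
    (hred : 158 * k ^ 2 ≤ redCount k P)
    (hgl : G1.length ≤ F1.length + 2 * k)
    (path : List (ℕ × ℕ))
    (hpath : IsAlignment 0 (F1 ++ P ++ F2).length 0 (G1 ++ P ++ G2).length path)
    (hcons : Consistent (F1 ++ P ++ F2) (G1 ++ P ++ G2) path)
    (hcost : pathCost w (F1 ++ P ++ F2) (G1 ++ P ++ G2) path ≤ (k : ℝ≥0))
    (a b : ℕ)
    (hamin : ∀ t, t < a → ∀ p : ℕ × ℕ, path[t]? = some p →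
      ¬(F1.length ≤ p.1 ∨ G1.length ≤ p.2))
    (pb : ℕ × ℕ) (hpb : path[b]? = some pb)
    (hpbP : F1.length + P.length ≤ pb.1 ∧ G1.length + P.length ≤ pb.2)
    (hbad : ∀ t, a ≤ t → t ≤ b → ∀ p : ℕ × ℕ, path[t]? = some p →
      ((F1.length : ℤ) - G1.length < (p.1 : ℤ) - p.2)) : False := by
  obtain ⟨hhead, hlast, hch⟩ := hpath
  set F : List (Paren α) := F1 ++ P ++ F2 with hFeq
  set G : List (Paren α) := G1 ++ P ++ G2 with hGeq
  rw [List.head?_eq_getElem?] at hhead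
  rw [List.getLast?_eq_getElem?] at hlast
  obtain ⟨h0n, hv0⟩ := some_vv hhead
  obtain ⟨hln, hvl⟩ := some_vv hlast
  obtain ⟨hbn, hvb⟩ := some_vv hpb
  have hFlen : F.length = F1.length + P.length + F2.length := by
    rw [hFeq]; simp only [List.length_append]
  have hGlen : G.length = G1.length + P.length + G2.length := by
    rw [hGeq]; simp only [List.length_append]
  -- upper bounds for coordinates
  have hub : ∀ t, t < path.length →
      (vv path t).1 ≤ F.length ∧ (vv path t).2 ≤ G.length := by
    intro t ht
    have := path_mono hch (show t ≤ path.length - 1 by omega) (by omega)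
    rw [← hvl] at this
    exact this
  -- times of window positions are ≥ a
  have ha_le : ∀ t, t < path.length →
      (F1.length ≤ (vv path t).1 ∨ G1.length ≤ (vv path t).2) → a ≤ t := by
    intro t ht hor
    by_contra hc
    exact hamin t (by omega) _ (vv_some ht) hor
  -- times of window positions are ≤ b
  have hb_ge : ∀ t, t < path.length →
      ((vv path t).1 < F1.length + P.length ∨ (vv path t).2 < G1.length + P.length) →
      t ≤ b := by
    intro t ht hor
    by_contra hc
    have := path_mono hch (show b ≤ t by omega) ht
    rw [← hvb] at this
    rcases hor with h | h
    · omega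
    · omega
  -- the shift rule
  have hkey : ∀ iF iG, iF < P.length → iG < P.length →
      AlignsAt path (F1.length + iF) (G1.length + iG) → iG < iF := by
    intro iF iG hiF hiG ⟨t, h1, h2⟩
    obtain ⟨htn, hvt⟩ := some_vv h1
    have h3 := ha_le t htn (by rw [← hvt]; left; exact Nat.le_add_right _ _)
    have h4 := hb_ge t htn (by
      rw [← hvt]; left
      show F1.length + iF < F1.length + P.length
      omega)
    have h5 := hbad t h3 h4 _ h1
    simp only at h5
    omega
  -- characters in the middle
  have hFmid : ∀ m, m < P.length → F[F1.length + m]? = P[m]? := by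
    intro m hm
    rw [hFeq, List.append_assoc, List.getElem?_append_right (by omega),
      Nat.add_sub_cancel_left, List.getElem?_append_left hm]
  have hGmid : ∀ m, m < P.length → G[G1.length + m]? = P[m]? := by
    intro m hm
    rw [hGeq, List.append_assoc, List.getElem?_append_right (by omega),
      Nat.add_sub_cancel_left, List.getElem?_append_left hm]
  -- the mate rule
  have hrule : ∀ iF iG, iF < P.length → iG < P.length →
      AlignsAt path (F1.length + iF) (G1.length + iG) →
      ∀ jF jG, MateRel P iF jF → MateRel P iG jG → jG < jF := by
    intro iF iG hiF hiG hal jF jG hjF hjG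
    have hjFP : jF < P.length := by
      rcases hjF with h | h
      · exact h.2.1
      · have := h.1; have := h.2.1; omega
    have hjGP : jG < P.length := by
      rcases hjG with h | h
      · exact h.2.1
      · have := h.1; have := h.2.1; omega
    have hmF : MateRel F (F1.length + iF) (F1.length + jF) := by
      rcases hjF with h | h
      · exact Or.inl (isNode_shift F1 F2 h)
      · exact Or.inr (isNode_shift F1 F2 h)
    have hmG : MateRel G (G1.length + iG) (G1.length + jG) := by
      rcases hjG with h | h
      · exact Or.inl (isNode_shift G1 G2 h)
      · exact Or.inr (isNode_shift G1 G2 h)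
    exact hkey jF jG hjFP hjGP (hcons _ _ _ _ hal hmF hmG)
  -- monotonicity of aligned pairs
  have hdm : ∀ f g f' g', AlignsAt path f g → AlignsAt path f' g' → f < f' → g < g' := by
    intro f g f' g' ⟨t, h1, h2⟩ ⟨t', h1', h2'⟩ hff
    obtain ⟨htn, hvt⟩ := some_vv h1
    obtain ⟨htn1, hvt1⟩ := some_vv h2
    obtain ⟨htn', hvt'⟩ := some_vv h1'
    obtain ⟨htn1', hvt1'⟩ := some_vv h2'
    have htt : t < t' := by
      by_contra hc
      have := path_mono hch (show t' ≤ t by omega) htn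
      rw [← hvt, ← hvt'] at this
      simp at this
      omega
    have := path_mono hch (show t + 1 ≤ t' by omega) htn'
    rw [← hvt1, ← hvt'] at this
    simp at this
    omega
  -- the set of costly edges
  set Bad : Finset ℕ := (Finset.range (path.length - 1)).filter
    (fun t => (1 / 2 : ℝ≥0) ≤ ec w F G path t) with hBadeq
  have hBadcard : Bad.card ≤ 2 * k := by
    have h1 := cost_lower_bound w F G path Bad (by
      intro t ht
      rw [hBadeq, Finset.mem_filter, Finset.mem_range] at ht
      exact ⟨ht.1, ht.2⟩)
    have h2 : (Bad.card : ℝ≥0) ≤ ((2 * k : ℕ) : ℝ≥0) := by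
      have h3 : (Bad.card : ℝ≥0) * (1 / 2) ≤ (k : ℝ≥0) := le_trans h1 hcost
      have h4 : (Bad.card : ℝ≥0) * (1 / 2) * 2 ≤ (k : ℝ≥0) * 2 :=
        mul_le_mul_left h3 2
      calc (Bad.card : ℝ≥0) = (Bad.card : ℝ≥0) * (1 / 2) * 2 := by
            rw [mul_assoc]; norm_num
        _ ≤ (k : ℝ≥0) * 2 := h4
        _ = ((2 * k : ℕ) : ℝ≥0) := by push_cast; ring
    exact_mod_cast h2
  -- classification of costly edges
  have hH : ∀ t, t + 1 < path.length → (vv path (t+1)).1 = (vv path t).1 + 1 →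
      (vv path (t+1)).2 = (vv path t).2 → t ∈ Bad := by
    intro t ht h1 h2
    rw [hBadeq, Finset.mem_filter, Finset.mem_range]
    refine ⟨by omega, ?_⟩
    have hfF : (vv path t).1 < F.length := by
      have := (hub (t+1) ht).1; omega
    unfold ec
    rw [if_pos ⟨h1, h2⟩]
    have hl : lbl F ((vv path t).1) = some (F[(vv path t).1].2) := by
      unfold lbl
      rw [List.getElem?_eq_getElem hfF]
      rfl
    have hw1 : (1 : ℝ≥0) ≤ w (lbl F ((vv path t).1)) none := by
      apply hw.2
      rw [hl]; simp
    calc (1/2 : ℝ≥0) = (1/2) * 1 := by ring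
      _ ≤ _ := mul_le_mul_right hw1 _
  have hV : ∀ t, t + 1 < path.length → (vv path (t+1)).1 = (vv path t).1 →
      (vv path (t+1)).2 = (vv path t).2 + 1 → t ∈ Bad := by
    intro t ht h1 h2
    rw [hBadeq, Finset.mem_filter, Finset.mem_range]
    refine ⟨by omega, ?_⟩
    have hgG : (vv path t).2 < G.length := by
      have := (hub (t+1) ht).2; omega
    unfold ec
    rw [if_neg (by omega), if_pos ⟨h1, h2⟩]
    have hl : lbl G ((vv path t).2) = some (G[(vv path t).2].2) := by
      unfold lbl
      rw [List.getElem?_eq_getElem hgG]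
      rfl
    have hw1 : (1 : ℝ≥0) ≤ w none (lbl G ((vv path t).2)) := by
      apply hw.2
      rw [hl]; simp
    calc (1/2 : ℝ≥0) = (1/2) * 1 := by ring
      _ ≤ _ := mul_le_mul_right hw1 _
  have hD : ∀ t, t + 1 < path.length → (vv path (t+1)).1 = (vv path t).1 + 1 →
      (vv path (t+1)).2 = (vv path t).2 + 1 →
      lbl F ((vv path t).1) ≠ lbl G ((vv path t).2) → t ∈ Bad := by
    intro t ht h1 h2 hne
    rw [hBadeq, Finset.mem_filter, Finset.mem_range]
    refine ⟨by omega, ?_⟩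
    unfold ec
    rw [if_neg (by omega), if_neg (by omega)]
    have hw1 : (1 : ℝ≥0) ≤ w (lbl F ((vv path t).1)) (lbl G ((vv path t).2)) := hw.2 _ _ hne
    calc (1/2 : ℝ≥0) = (1/2) * 1 := by ring
      _ ≤ _ := mul_le_mul_right hw1 _
  -- bound on the diagonal shift
  have hdmax : ∀ t, t < path.length →
      ((vv path t).1 : ℤ) - (vv path t).2 ≤ 2 * k := by
    have main : ∀ t, t < path.length →
        ((vv path t).1 : ℤ) - (vv path t).2 ≤ ((Finset.range t).filter (· ∈ Bad)).card := by
      intro t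
      induction t with
      | zero => intro _; rw [← hv0]; simp
      | succ t ih =>
          intro ht
          have ih' := ih (by omega)
          have hmono : (((Finset.range t).filter (· ∈ Bad)).card : ℤ) ≤
              ((Finset.range (t+1)).filter (· ∈ Bad)).card := by
            have : (Finset.range t).filter (· ∈ Bad) ⊆ (Finset.range (t+1)).filter (· ∈ Bad) := by
              apply Finset.filter_subset_filter
              intro u hu
              rw [Finset.mem_range] at hu ⊢
              omega
            exact_mod_cast Finset.card_le_card this
          rcases path_step hch ht with hstep | hstep | hstep
          · -- horizontal: charge it
            have hmem : t ∈ Bad := hH t ht (by rw [hstep]) (by rw [hstep])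
            have hins : (Finset.range (t+1)).filter (· ∈ Bad) =
                insert t ((Finset.range t).filter (· ∈ Bad)) := by
              rw [Finset.range_add_one, Finset.filter_insert, if_pos hmem]
            rw [hstep, hins, Finset.card_insert_of_notMem (by simp)]
            push_cast
            omega
          · rw [hstep]
            push_cast
            omega
          · rw [hstep]
            push_cast
            omega
    intro t ht
    have h1 := main t ht
    have h2 : ((Finset.range t).filter (· ∈ Bad)).card ≤ Bad.card :=
      Finset.card_le_card (Finset.filter_subset_filter _ (by intro u hu; exact hu) |>.trans
        (by intro u hu; rw [Finset.mem_filter] at hu; exact hu.2))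
    omega
  -- existence of crossing steps
  have hcross : ∀ j, j < G.length → ∃ t, t + 1 < path.length ∧
      (vv path t).2 = j ∧ (vv path (t+1)).2 = j + 1 := by
    intro j hj
    have hex : ∃ u, u < path.length ∧ j + 1 ≤ (vv path u).2 :=
      ⟨path.length - 1, by omega, by rw [← hvl]; show j + 1 ≤ G.length; omega⟩
    have hspec := Nat.find_spec hex
    set u0 := Nat.find hex with hu0
    have hu0pos : 0 < u0 := by
      rcases Nat.eq_zero_or_pos u0 with h | h
      · exfalso
        rw [h] at hspec
        rw [← hv0] at hspec
        simp at hspec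
      · exact h
    have hmin : ¬(u0 - 1 < path.length ∧ j + 1 ≤ (vv path (u0 - 1)).2) :=
      Nat.find_min hex (by omega)
    push_neg at hmin
    have h1 : (vv path (u0 - 1)).2 ≤ j := by
      have := hmin (by omega)
      omega
    have hstep := path_step hch (show (u0 - 1) + 1 < path.length by omega)
    rw [show u0 - 1 + 1 = u0 by omega] at hstep
    obtain ⟨hs1, hs2⟩ := hspec
    refine ⟨u0 - 1, by omega, ?_, ?_⟩
    · rcases hstep with h | h | h <;> rw [h] at hs2 <;> simp at hs2 <;> omega
    · rw [show u0 - 1 + 1 = u0 by omega]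
      rcases hstep with h | h | h <;> rw [h] at hs2 ⊢ <;> simp at hs2 ⊢ <;> omega
  -- uniqueness of crossing steps
  have huniq : ∀ j t t', (t + 1 < path.length ∧ (vv path t).2 = j ∧ (vv path (t+1)).2 = j + 1) →
      (t' + 1 < path.length ∧ (vv path t').2 = j ∧ (vv path (t'+1)).2 = j + 1) → t = t' := by
    intro j t t' h h'
    by_contra hne
    wlog hlt : t < t' generalizing t t'
    · exact this t' t h' h (Ne.symm hne) (by omega)
    have := (path_mono hch (show t + 1 ≤ t' by omega) (by omega)).2
    omega
  -- the crossing times of the occurrence of P in G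
  have hTex : ∀ j, ∃ t, j < P.length → (t + 1 < path.length ∧
      (vv path t).2 = G1.length + j ∧ (vv path (t+1)).2 = G1.length + j + 1) := by
    intro j
    by_cases hj : j < P.length
    · obtain ⟨t, ht⟩ := hcross (G1.length + j) (by omega)
      exact ⟨t, fun _ => ht⟩
    · exact ⟨0, fun h => absurd h hj⟩
  choose T hT using hTex
  have hTwin : ∀ j, j < P.length → a ≤ T j ∧ T j ≤ b := by
    intro j hj
    obtain ⟨h1, h2, h3⟩ := hT j hj
    constructor
    · exact ha_le (T j) (by omega) (Or.inr (by rw [h2]; omega))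
    · exact hb_ge (T j) (by omega) (Or.inr (by rw [h2]; omega))
  -- matched positions and their partners
  set Mch : ℕ → Prop := fun j => (vv path (T j + 1)).1 = (vv path (T j)).1 + 1 ∧
    lbl F ((vv path (T j)).1) = lbl G (G1.length + j) with hMchEq
  set Ish : ℕ → ℕ := fun j => (vv path (T j)).1 - F1.length with hIshEq
  have hm0 : ∀ j, j < P.length → Mch j →
      AlignsAt path (F1.length + Ish j) (G1.length + j) ∧ j < Ish j ∧ Ish j ≤ j + 4 * k := by
    intro j hj hM
    obtain ⟨h1, h2, h3⟩ := hT j hj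
    obtain ⟨hQ1, hQ2⟩ := hM
    have hw1 := hTwin j hj
    have hb1 := hbad (T j) hw1.1 hw1.2 _ (vv_some (show T j < path.length by omega))
    rw [h2] at hb1
    have hf : F1.length + j < (vv path (T j)).1 := by omega
    have hIdef : Ish j = (vv path (T j)).1 - F1.length := rfl
    have hIs : F1.length + Ish j = (vv path (T j)).1 := by omega
    have hveq : vv path (T j) = (F1.length + Ish j, G1.length + j) := pairext hIs.symm h2
    have hveq1 : vv path (T j + 1) = (F1.length + Ish j + 1, G1.length + j + 1) :=
      pairext (by rw [hQ1]; omega) h3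
    refine ⟨⟨T j, ?_, ?_⟩, by omega, ?_⟩
    · rw [vv_some (show T j < path.length by omega), hveq]
    · rw [vv_some h1, hveq1]
    · have hd := hdmax (T j) (by omega)
      rw [h2] at hd
      omega
  -- matched positions carry equal characters
  have hm1 : ∀ j, j < P.length → Mch j → Ish j < P.length → P[Ish j]? = P[j]? := by
    intro j hj hM hIP
    obtain ⟨hal, hlt, hub4⟩ := hm0 j hj hM
    obtain ⟨h1, h2, h3⟩ := hT j hj
    obtain ⟨hQ1, hQ2⟩ := hM
    have hIdef : Ish j = (vv path (T j)).1 - F1.length := rfl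
    have hIs : F1.length + Ish j = (vv path (T j)).1 := by omega
    have hPI : P[Ish j]? = some P[Ish j] := List.getElem?_eq_getElem hIP
    have hPj : P[j]? = some P[j] := List.getElem?_eq_getElem hj
    have hlab : (P[Ish j]).2 = (P[j]).2 := by
      have hQ2' := hQ2
      rw [← hIs] at hQ2'
      unfold lbl at hQ2'
      rw [hFmid _ hIP, hGmid _ hj, hPI, hPj] at hQ2'
      simpa using hQ2'
    have hbool : (P[Ish j]).1 = (P[j]).1 := by
      by_contra hne
      obtain ⟨mF, hmF⟩ := mate_exists hP (Ish j) hIP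
      obtain ⟨mG, hmG⟩ := mate_exists hP j hj
      have hmFP : mF < P.length := by
        rcases hmF with h | h
        · exact h.2.1
        · have := h.1; have := h.2.1; omega
      have hmGP : mG < P.length := by
        rcases hmG with h | h
        · exact h.2.1
        · have := h.1; have := h.2.1; omega
      have hmFF : MateRel F (F1.length + Ish j) (F1.length + mF) := by
        rcases hmF with h | h
        · exact Or.inl (isNode_shift F1 F2 h)
        · exact Or.inr (isNode_shift F1 F2 h)
      have hmGG : MateRel G (G1.length + j) (G1.length + mG) := by
        rcases hmG with h | h
        · exact Or.inl (isNode_shift G1 G2 h)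
        · exact Or.inr (isNode_shift G1 G2 h)
      have halm : AlignsAt path (F1.length + mF) (G1.length + mG) :=
        hcons _ _ _ _ hal hmFF hmGG
      cases hF1 : (P[Ish j]).1 <;> cases hG1 : (P[j]).1
      · rw [hF1, hG1] at hne; exact hne rfl
      · -- F-side closing, G-side opening
        have hcF : P[Ish j]? = some (false, (P[Ish j]).2) := by
          rw [hPI]
          have : P[Ish j] = (false, (P[Ish j]).2) := by rw [← hF1]
          rw [← this]
        have hcG : P[j]? = some (true, (P[j]).2) := by
          rw [hPj]
          have : P[j] = (true, (P[j]).2) := by rw [← hG1]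
          rw [← this]
        have hnF : IsNode P mF (Ish j) := mateRel_close hmF hcF
        have hnG : IsNode P j mG := mateRel_open hmG hcG
        have := hdm _ _ _ _ halm hal (by have := hnF.1; omega)
        have := hnG.1
        omega
      · -- F-side opening, G-side closing
        have hcF : P[Ish j]? = some (true, (P[Ish j]).2) := by
          rw [hPI]
          have : P[Ish j] = (true, (P[Ish j]).2) := by rw [← hF1]
          rw [← this]
        have hcG : P[j]? = some (false, (P[j]).2) := by
          rw [hPj]
          have : P[j] = (false, (P[j]).2) := by rw [← hG1]
          rw [← this]
        have hnF : IsNode P (Ish j) mF := mateRel_open hmF hcF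
        have hnG : IsNode P mG j := mateRel_close hmG hcG
        have := hdm _ _ _ _ hal halm (by have := hnF.1; omega)
        have := hnG.1
        omega
      · rw [hF1, hG1] at hne; exact hne rfl
    have : P[Ish j] = P[j] := Prod.ext_iff.mpr ⟨hbool, hlab⟩
    rw [hPI, hPj, this]
  -- unmatched positions are expensive
  have hm2 : ∀ j, j < P.length → ¬ Mch j → T j ∈ Bad := by
    intro j hj hnM
    obtain ⟨h1, h2, h3⟩ := hT j hj
    rcases path_step hch h1 with h | h | h
    · exfalso
      rw [h] at h3
      simp at h3
      omega
    · exact hV (T j) h1 (by rw [h]) (by rw [h, h2])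
    · have hQ1 : (vv path (T j + 1)).1 = (vv path (T j)).1 + 1 := by rw [h]
      have hlabne : lbl F ((vv path (T j)).1) ≠ lbl G (G1.length + j) := by
        intro hc
        exact hnM ⟨hQ1, hc⟩
      refine hD (T j) h1 hQ1 (by rw [h]) ?_
      rw [h2]
      exact hlabne
  -- shift changes are expensive
  have hm3 : ∀ j, j + 1 < P.length → Mch j → Mch (j+1) → Ish (j+1) ≠ Ish j + 1 →
      T j + 1 ∈ Bad ∧ T j + 1 < T (j + 1) := by
    intro j hj hMj hMj1 hne
    obtain ⟨h1, h2, h3⟩ := hT j (by omega)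
    obtain ⟨h1', h2', h3'⟩ := hT (j+1) hj
    have hIdef : Ish j = (vv path (T j)).1 - F1.length := rfl
    have hIdef' : Ish (j+1) = (vv path (T (j+1))).1 - F1.length := rfl
    obtain ⟨_, hltj, _⟩ := hm0 j (by omega) hMj
    obtain ⟨_, hltj1, _⟩ := hm0 (j+1) hj hMj1
    have htt : T j < T (j+1) := by
      by_contra hc
      have := (path_mono hch (show T (j+1) ≤ T j by omega) (by omega)).2
      rw [h2, h2'] at this
      omega
    have hmono2 := path_mono hch (show T j + 1 ≤ T (j+1) by omega) (by omega)
    have hfst : (vv path (T j)).1 + 1 ≤ (vv path (T (j+1))).1 := by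
      have h5 := hmono2.1
      rw [hMj.1] at h5
      exact h5
    have hstrict : (vv path (T j)).1 + 1 < (vv path (T (j+1))).1 := by
      rcases Nat.eq_or_lt_of_le hfst with hcase | hcase
      · exfalso
        apply hne
        omega
      · exact hcase
    have htt2 : T j + 1 < T (j+1) := by
      by_contra hc
      have hceq : T (j+1) = T j + 1 := by omega
      rw [hceq, hMj.1] at hstrict
      omega
    have hsnd2 : (vv path (T j + 1 + 1)).2 = G1.length + j + 1 := by
      have hA := (path_mono hch (show T j + 1 ≤ T j + 1 + 1 by omega)
        (show T j + 1 + 1 < path.length by omega)).2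
      have hB := (path_mono hch (show T j + 1 + 1 ≤ T (j+1) by omega) (by omega)).2
      rw [h3] at hA
      rw [h2'] at hB
      omega
    refine ⟨?_, htt2⟩
    rcases path_step hch (show (T j + 1) + 1 < path.length by omega) with h | h | h
    · exact hH (T j + 1) (by omega) (by rw [h]) (by rw [h])
    · exfalso
      rw [h] at hsnd2
      simp at hsnd2
      omega
    · exfalso
      rw [h] at hsnd2
      simp at hsnd2
      omega
  -- the defect set
  set Def : Finset ℕ := (Finset.range P.length).filter
    (fun j => ¬ Mch j ∨ (j + 1 < P.length ∧ Mch j ∧ Mch (j+1) ∧ Ish (j+1) ≠ Ish j + 1))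
    with hDefEq
  have hDefcard : Def.card ≤ 2 * k := by
    refine le_trans ?_ hBadcard
    apply Finset.card_le_card_of_injOn (fun j => if Mch j then T j + 1 else T j)
    · intro j hjD
      rw [hDefEq, Finset.mem_coe, Finset.mem_filter, Finset.mem_range] at hjD
      simp only [Finset.mem_coe]
      obtain ⟨hjP, hprop⟩ := hjD
      by_cases hM : Mch j
      · rw [if_pos hM]
        rcases hprop with h | h
        · exact absurd hM h
        · exact (hm3 j h.1 h.2.1 h.2.2.1 h.2.2.2).1
      · rw [if_neg hM]
        exact hm2 j hjP hM
    · intro j hjD j' hjD' heq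
      rw [hDefEq] at hjD hjD'
      simp only [Finset.coe_filter, Set.mem_setOf_eq, Finset.mem_coe,
        Finset.mem_range] at hjD hjD'
      obtain ⟨hjP, hprop⟩ := hjD
      obtain ⟨hjP', hprop'⟩ := hjD'
      obtain ⟨hA1, hA2, hA3⟩ := hT j hjP
      obtain ⟨hB1, hB2, hB3⟩ := hT j' hjP'
      replace heq : (if Mch j then T j + 1 else T j) = (if Mch j' then T j' + 1 else T j') := heq
      by_cases hM : Mch j <;> by_cases hM' : Mch j'
      · rw [if_pos hM, if_pos hM'] at heq
        have hTeq : T j = T j' := by omega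
        have hx := hA2
        rw [hTeq, hB2] at hx
        omega
      · -- Mch j, ¬ Mch j' : then j' = j + 1 and Mch (j+1) gives a contradiction
        rw [if_pos hM, if_neg hM'] at heq
        have hx := hA3
        rw [heq, hB2] at hx
        have hj'eq : j' = j + 1 := by omega
        rcases hprop with h | h
        · exact absurd hM h
        · exfalso
          apply hM'
          rw [hj'eq]
          exact h.2.2.1
      · -- ¬ Mch j, Mch j' : symmetric
        rw [if_neg hM, if_pos hM'] at heq
        have hx := hB3
        rw [← heq, hA2] at hx
        have hjeq : j = j' + 1 := by omega
        rcases hprop' with h | h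
        · exact absurd hM' h
        · exfalso
          apply hM
          rw [hjeq]
          exact h.2.2.1
      · rw [if_neg hM, if_neg hM'] at heq
        have hx := hA2
        rw [heq, hB2] at hx
        omega
  -- red characters are near defects or boundaries
  have hsub : (Finset.range P.length).filter (fun i => ¬ IsBlack k P i) ⊆
      ((Finset.range (5*k)) ∪ (Finset.Ico (P.length - 41*k) P.length)) ∪
        Def.biUnion (fun j => Finset.Icc (j - 37*k) (j + 5*k)) := by
    intro i hi
    rw [Finset.mem_filter, Finset.mem_range] at hi
    obtain ⟨hiP, hired⟩ := hi
    by_contra hnot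
    rw [Finset.mem_union, Finset.mem_union, Finset.mem_range, Finset.mem_Ico,
      Finset.mem_biUnion] at hnot
    push_neg at hnot
    obtain ⟨⟨hA, hB⟩, hC⟩ := hnot
    have h5k : 5*k ≤ i := by omega
    have h41 : i + 41*k + 1 ≤ P.length := by
      rcases Nat.lt_or_ge i (P.length - 41*k) with h | h
      · omega
      · exact absurd hiP (by omega)
    set x := i - 5*k with hxdef
    have hDefnot : ∀ j, x ≤ j → j ≤ x + 42*k → j ∉ Def := by
      intro j hj1 hj2 hmem
      exact hC j hmem (Finset.mem_Icc.mpr ⟨by omega, by omega⟩)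
    have hallM : ∀ j, x ≤ j → j ≤ x + 42*k → Mch j := by
      intro j hj1 hj2
      by_contra hno
      exact hDefnot j hj1 hj2 (by
        rw [hDefEq, Finset.mem_filter, Finset.mem_range]
        exact ⟨by omega, Or.inl hno⟩)
    have hstp : ∀ j, x ≤ j → j < x + 42*k → Ish (j+1) = Ish j + 1 := by
      intro j hj1 hj2
      by_contra hno
      exact hDefnot j hj1 (by omega) (by
        rw [hDefEq, Finset.mem_filter, Finset.mem_range]
        exact ⟨by omega, Or.inr ⟨by omega, hallM j hj1 (by omega),
          hallM (j+1) (by omega) (by omega), hno⟩⟩)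
    set s := Ish x - x with hsdef
    obtain ⟨_, hxlt, hxub⟩ := hm0 x (by omega) (hallM x (le_refl x) (by omega))
    have hs0 : 0 < s := by omega
    have hs4 : s ≤ 4*k := by omega
    have hshift : ∀ j, x ≤ j → j ≤ x + 42*k → Ish j = j + s := by
      intro j hj1
      induction j, hj1 using Nat.le_induction with
      | base => intro _; omega
      | succ j hj ih =>
          intro h2
          rw [hstp j hj (by omega), ih (by omega)]
          omega
    have hblack := run_black k hk P hP (x := x) (s := s) hs0 hs4 (by omega)
      (fun j hj1 hj2 => by
        rw [← hshift j hj1 hj2]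
        exact hm1 j (by omega) (hallM j hj1 hj2) (by rw [hshift j hj1 hj2]; omega))
      (fun j hj1 hj2 jF jG hjF hjG => by
        have hM := hallM j hj1 hj2
        have hal := (hm0 j (by omega) hM).1
        rw [hshift j hj1 hj2] at hal
        exact hrule (j + s) j (by omega) (by omega) hal jF jG hjF hjG)
    exact hired (hblack i (by omega) (by omega))
  -- counting
  have hcount : redCount k P ≤ 5*k + 41*k + Def.card * (42*k + 1) := by
    unfold redCount
    have h1 := Finset.card_le_card hsub
    have h2 := Finset.card_union_le ((Finset.range (5*k)) ∪ (Finset.Ico (P.length - 41*k) P.length))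
      (Def.biUnion (fun j => Finset.Icc (j - 37*k) (j + 5*k)))
    have h3 := Finset.card_union_le (Finset.range (5*k)) (Finset.Ico (P.length - 41*k) P.length)
    have h4 : (Def.biUnion (fun j => Finset.Icc (j - 37*k) (j + 5*k))).card ≤
        Def.card * (42*k + 1) := by
      refine le_trans Finset.card_biUnion_le ?_
      refine le_trans (Finset.sum_le_card_nsmul _ _ (42*k+1) ?_) (by rw [smul_eq_mul])
      intro j _
      rw [Nat.card_Icc]
      omega
    have h5 : (Finset.Ico (P.length - 41*k) P.length).card ≤ 41*k := by
      rw [Nat.card_Ico]; omega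
    have h6 : (Finset.range (5*k)).card = 5*k := Finset.card_range _
    omega
  have hfin : 158 * k^2 ≤ 5*k + 41*k + 2*k*(42*k+1) :=
    calc 158*k^2 ≤ redCount k P := hred
      _ ≤ 5*k + 41*k + Def.card * (42*k+1) := hcount
      _ ≤ 5*k + 41*k + (2*k)*(42*k+1) :=
          Nat.add_le_add_left (Nat.mul_le_mul_right _ hDefcard) _
  have hk2 : k^2 = k * k := sq k
  have hkk : k ≤ k * k := Nat.le_mul_of_pos_left k hk
  nlinarith [hfin, hk2, hkk, hk]

end TedAux
namespace TedAux
open List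
variable {α : Type*}

lemma alignStep_swap {p q : ℕ × ℕ} (h : AlignStep p q) : AlignStep p.swap q.swap := by
  rcases h with h | h | h <;> rw [h] <;> simp [AlignStep, Prod.swap] <;> tauto

lemma getElem?_swap (path : List (ℕ × ℕ)) (t : ℕ) {p : ℕ × ℕ}
    (h : (path.map Prod.swap)[t]? = some p) : path[t]? = some p.swap := by
  rw [List.getElem?_map] at h
  rcases hq : path[t]? with _ | q
  · rw [hq] at h; simp at h
  · rw [hq] at h
    simp only [Option.map_some] at h
    rw [← Option.some_inj.mp h]
    simp

lemma getElem?_swap' (path : List (ℕ × ℕ)) (t : ℕ) {p : ℕ × ℕ}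
    (h : path[t]? = some p) : (path.map Prod.swap)[t]? = some p.swap := by
  rw [List.getElem?_map, h]
  rfl

lemma alignsAt_swap {path : List (ℕ × ℕ)} {f g : ℕ}
    (h : AlignsAt (path.map Prod.swap) f g) : AlignsAt path g f := by
  obtain ⟨t, h1, h2⟩ := h
  exact ⟨t, getElem?_swap path t h1, getElem?_swap path (t+1) h2⟩

lemma alignsAt_swap' {path : List (ℕ × ℕ)} {f g : ℕ}
    (h : AlignsAt path g f) : AlignsAt (path.map Prod.swap) f g := by
  obtain ⟨t, h1, h2⟩ := h
  exact ⟨t, getElem?_swap' path t h1, getElem?_swap' path (t+1) h2⟩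

lemma isAlignment_swap {x x' y y' : ℕ} {path : List (ℕ × ℕ)}
    (h : IsAlignment x x' y y' path) :
    IsAlignment y y' x x' (path.map Prod.swap) := by
  obtain ⟨h1, h2, h3⟩ := h
  refine ⟨?_, ?_, ?_⟩
  · rw [List.head?_map, h1]; rfl
  · rw [List.getLast?_map, h2]; rfl
  · show List.IsChain _ _; rw [List.isChain_map]
    exact List.IsChain.imp (fun p q hpq => alignStep_swap hpq) h3

lemma consistent_swap {X Y : List (Paren α)} {path : List (ℕ × ℕ)}
    (h : Consistent X Y path) : Consistent Y X (path.map Prod.swap) := by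
  intro f g f' g' hal hmF hmG
  exact alignsAt_swap' (h g f g' f' (alignsAt_swap hal) hmG hmF)

lemma pathCost_swap (w : Option α → Option α → ℝ≥0) (X Y : List (Paren α)) :
    ∀ path : List (ℕ × ℕ),
      pathCost (fun u v => w v u) Y X (path.map Prod.swap) = pathCost w X Y path
  | [] => rfl
  | [p] => rfl
  | p :: q :: rest => by
      have ih := pathCost_swap w X Y (q :: rest)
      simp only [List.map_cons] at ih ⊢
      rw [pathCost, pathCost]
      rw [ih]
      congr 1
      by_cases hA : q.1 = p.1 + 1 ∧ q.2 = p.2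
      · rw [if_neg (by simp [Prod.swap]; omega), if_pos (by simp [Prod.swap]; omega),
          if_pos hA]
        simp [Prod.swap]
      · by_cases hB : q.1 = p.1 ∧ q.2 = p.2 + 1
        · rw [if_pos (by simp [Prod.swap]; omega), if_neg (by omega), if_pos hB]
          simp [Prod.swap]
        · rw [if_neg (by simp [Prod.swap]; omega), if_neg (by simp [Prod.swap]; omega),
            if_neg (by omega), if_neg (by omega)]
          simp [Prod.swap]

end TedAux
/-- Claim C.8: let `P` be a forest with at least `158k²` red
characters occurring in `F = F₁·P·F₂` at position `p_F = |F₁|` and in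
`G = G₁·P·G₂` at position `p_G = |G₁|` with `|p_F − p_G| ≤ 2k`. If `A` is a
forest alignment of `F` onto `G` of cost at most `k`, `a` is the smallest index
of `A` with `f_a ≥ p_F` or `g_a ≥ p_G`, and `b` is the smallest index with
`f_b ≥ p_F + |P|` and `g_b ≥ p_G + |P|`, then some `t ∈ [a..b]` satisfies
`f_t − g_t = p_F − p_G`. -/
theorem alignment_crosses_diagonal {α : Type*} (k : ℕ) (hk : 0 < k)
    (w : Option α → Option α → ℝ≥0) (hw : Normalized w) (hq : Quasimetric w)
    (P F1 F2 G1 G2 : List (Paren α)) (hP : IsForest P)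
    (hred : 158 * k ^ 2 ≤ redCount k P)
    (hF : IsForest (F1 ++ P ++ F2)) (hG : IsForest (G1 ++ P ++ G2))
    (hlg : F1.length ≤ G1.length + 2 * k) (hgl : G1.length ≤ F1.length + 2 * k)
    (path : List (ℕ × ℕ))
    (hpath : IsAlignment 0 (F1 ++ P ++ F2).length 0 (G1 ++ P ++ G2).length path)
    (hcons : Consistent (F1 ++ P ++ F2) (G1 ++ P ++ G2) path)
    (hcost : pathCost w (F1 ++ P ++ F2) (G1 ++ P ++ G2) path ≤ (k : ℝ≥0))
    (a b : ℕ) (pa pb : ℕ × ℕ)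
    (hpa : path[a]? = some pa) (hpaP : F1.length ≤ pa.1 ∨ G1.length ≤ pa.2)
    (hamin : ∀ t, t < a → ∀ p : ℕ × ℕ, path[t]? = some p →
      ¬(F1.length ≤ p.1 ∨ G1.length ≤ p.2))
    (hpb : path[b]? = some pb)
    (hpbP : F1.length + P.length ≤ pb.1 ∧ G1.length + P.length ≤ pb.2)
    (hbmin : ∀ t, t < b → ∀ p : ℕ × ℕ, path[t]? = some p →
      ¬(F1.length + P.length ≤ p.1 ∧ G1.length + P.length ≤ p.2)) :
    ∃ t p, a ≤ t ∧ t ≤ b ∧ path[t]? = some (p : ℕ × ℕ) ∧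
      (p.1 : ℤ) - (p.2 : ℤ) = (F1.length : ℤ) - (G1.length : ℤ) := by
  classical
  by_contra hcon
  push_neg at hcon
  have hch : path.Chain' AlignStep := hpath.2.2
  obtain ⟨hbn, hvb⟩ := TedAux.some_vv hpb
  obtain ⟨han, hva⟩ := TedAux.some_vv hpa
  have hab : a ≤ b := by
    by_contra h
    exact hamin b (by omega) pb hpb (Or.inl (by omega))
  have hne : ∀ t, a ≤ t → t ≤ b →
      ((TedAux.vv path t).1 : ℤ) - (TedAux.vv path t).2 ≠ (F1.length : ℤ) - G1.length := by
    intro t h1 h2 heq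
    exact hcon t (TedAux.vv path t) h1 h2 (TedAux.vv_some (by omega)) heq
  have hstepd : ∀ t, t + 1 < path.length →
      ((TedAux.vv path t).1 : ℤ) - (TedAux.vv path t).2 - 1 ≤
        ((TedAux.vv path (t+1)).1 : ℤ) - (TedAux.vv path (t+1)).2 ∧
      ((TedAux.vv path (t+1)).1 : ℤ) - (TedAux.vv path (t+1)).2 ≤
        ((TedAux.vv path t).1 : ℤ) - (TedAux.vv path t).2 + 1 := by
    intro t ht
    rcases TedAux.path_step hch ht with h | h | h <;> rw [h] <;> simp <;> omega
  have hda := hne a (le_refl a) hab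
  rw [← hva] at hda
  rcases lt_or_gt_of_ne hda with hlt | hgt
  · -- the shift is always below the target: use the swapped instance
    have hall : ∀ t, a ≤ t → t ≤ b →
        ((TedAux.vv path t).1 : ℤ) - (TedAux.vv path t).2 < (F1.length : ℤ) - G1.length := by
      intro t h1
      induction t, h1 using Nat.le_induction with
      | base => intro _; rw [← hva]; exact hlt
      | succ t h ih =>
          intro h2
          have ih' := ih (by omega)
          have hs := hstepd t (by omega)
          have hne' := hne (t+1) (by omega) h2
          omega
    refine TedAux.core k hk (fun u v => w v u)
      ⟨hw.1, fun x y h => hw.2 y x (Ne.symm h)⟩ P G1 G2 F1 F2 hP hred hlg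
      (path.map Prod.swap)
      (TedAux.isAlignment_swap hpath) (TedAux.consistent_swap hcons)
      (by rw [TedAux.pathCost_swap]; exact hcost) a b ?_ pb.swap
      (TedAux.getElem?_swap' path b hpb) ⟨hpbP.2, hpbP.1⟩ ?_
    · intro t ht p hp
      have h1 := hamin t ht p.swap (TedAux.getElem?_swap path t hp)
      simp only [Prod.fst_swap, Prod.snd_swap] at h1
      tauto
    · intro t h1 h2 p hp
      have hp' := TedAux.getElem?_swap path t hp
      obtain ⟨htn, hvp⟩ := TedAux.some_vv hp'
      have hq := hall t h1 h2
      have e1 : p.2 = (TedAux.vv path t).1 := by rw [← hvp]; rfl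
      have e2 : p.1 = (TedAux.vv path t).2 := by rw [← hvp]; rfl
      omega
  · -- the shift is always above the target
    have hall : ∀ t, a ≤ t → t ≤ b →
        (F1.length : ℤ) - G1.length < ((TedAux.vv path t).1 : ℤ) - (TedAux.vv path t).2 := by
      intro t h1
      induction t, h1 using Nat.le_induction with
      | base => intro _; rw [← hva]; exact hgt
      | succ t h ih =>
          intro h2
          have ih' := ih (by omega)
          have hs := hstepd t (by omega)
          have hne' := hne (t+1) (by omega) h2
          omega
    exact TedAux.core k hk w hw P F1 F2 G1 G2 hP hred hgl path hpath hcons hcost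
      a b hamin pb hpb hpbP
      (fun t h1 h2 p hp => by
        obtain ⟨htn, hvp⟩ := TedAux.some_vv hp
        rw [hvp]
        exact hall t h1 h2)
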